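/- Let N be a positive integer and ω a real number. Suppose w : ℝ × [0,π] → ℝ is twice continuously differentiable, 2π-periodic in its first argument (w(τ+2π,x) = w(τ,x) for all τ, x), satisfies w(τ,0) = w(τ,π) = 0 for all τ, and satisfies N² ∂²_τ w(τ,x) − ∂²_x w(τ,x) = ω · cos τ · sin(N x) − cos³τ · sin³(N x)/sin²x for all (τ,x) ∈ ℝ × (0,π). Then ω = 3N/4. -/

import Mathlib

open Real Set

open intervalIntegral MeasureTheory Function



lemma trig_sin_step (b x : ℝ) : sin (b + 2*x) - sin b = 2 * cos (b + x) * sin x := by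
  have h1 := sin_add (b+x) x
  have h2 := sin_sub (b+x) x
  rw [show b+x+x = b+2*x by ring] at h1
  rw [show b+x-x = b by ring] at h2
  linarith

lemma trig_cos_step (b x : ℝ) : 2 * cos (b+x) * cos x = cos (b + 2*x) + cos b := by
  have h1 := cos_add (b+x) x
  have h2 := cos_sub (b+x) x
  rw [show b+x+x = b+2*x by ring] at h1
  rw [show b+x-x = b by ring] at h2
  linarith


lemma trig_h1 (a x : ℝ) : sin (a+x)^2 - sin a^2 = sin (2*a+x) * sin x := by
  rw [show (2:ℝ)*a+x = a+(a+x) by ring]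
  simp only [sin_add, cos_add]
  linear_combination (sin a)^2 * sin_sq_add_cos_sq x

lemma trig_h2 (a x : ℝ) : sin (a+x)^2 + sin a^2 = 1 - cos (2*a+x) * cos x := by
  rw [show (2:ℝ)*a+x = a+(a+x) by ring]
  simp only [sin_add, cos_add]
  linear_combination (cos a)^2 * sin_sq_add_cos_sq x + sin_sq_add_cos_sq a

lemma trig_K (a x : ℝ) :
    sin (a+x)^4 - sin a^4 = sin x * sin (2*a+x) * (1 - cos (2*a+x) * cos x) := by
  linear_combination (sin (a+x)^2 + sin a^2) * trig_h1 a x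
    + (sin (2*a+x) * sin x) * trig_h2 a x



lemma contIntegrableIoo {f : ℝ → ℝ} (hf : Continuous f) : IntegrableOn f (Ioo 0 π) volume :=
  (hf.continuousOn.integrableOn_compact isCompact_Icc).mono_set Ioo_subset_Icc_self

lemma int_Ioo_eq (f : ℝ → ℝ) : ∫ x in Ioo (0:ℝ) π, f x = ∫ x in (0:ℝ)..π, f x := by
  rw [intervalIntegral.integral_of_le pi_pos.le, integral_Ioc_eq_integral_Ioo]

lemma sin_ne_zero_Ioo {x : ℝ} (hx : x ∈ Ioo (0:ℝ) π) : sin x ≠ 0 :=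
  (Real.sin_pos_of_pos_of_lt_pi hx.1 hx.2).ne'

lemma int_cos_mul (m : ℕ) (hm : 0 < m) : ∫ x in (0:ℝ)..π, cos (2*m*x) = 0 := by
  have h2m : (2*(m:ℝ)) ≠ 0 := by positivity
  rw [intervalIntegral.integral_comp_mul_left (fun x => cos x) h2m]
  simp only [integral_cos, mul_zero, Real.sin_zero, sub_zero, smul_eq_mul]
  rw [show 2*(m:ℝ)*π = (2*m : ℕ) * π by push_cast; ring, Real.sin_nat_mul_pi]
  simp

lemma int_cos_mul' (m : ℕ) (hm : 0 < m) : ∫ x in Ioo (0:ℝ) π, cos (2*m*x) = 0 := by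
  rw [int_Ioo_eq]; exact int_cos_mul m hm

lemma dirichlet (m : ℕ) :
    IntegrableOn (fun x => sin ((2*m+1)*x) / sin x) (Ioo 0 π) volume ∧
    ∫ x in Ioo (0:ℝ) π, sin ((2*m+1)*x) / sin x = π := by
  induction m with
  | zero =>
    have heq : EqOn (fun x => sin ((2*(0:ℕ)+1)*x) / sin x) (fun _ => (1:ℝ)) (Ioo 0 π) := by
      intro x hx
      simp only
      push_cast
      rw [show (2*(0:ℝ)+1)*x = x by ring, div_self (sin_ne_zero_Ioo hx)]
    constructor
    · exact (integrableOn_const (by simp) (by simp)).congr_fun heq.symm measurableSet_Ioo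
    · rw [setIntegral_congr_fun measurableSet_Ioo heq]
      simp [Real.pi_pos.le]
  | succ m ih =>
    have heq : EqOn (fun x => sin ((2*(m+1:ℕ)+1)*x) / sin x)
        (fun x => sin ((2*m+1)*x) / sin x + 2 * cos (2*(m+1:ℕ)*x)) (Ioo 0 π) := by
      intro x hx
      have hs := sin_ne_zero_Ioo hx
      have h := trig_sin_step ((2*m+1)*x) x
      rw [show (2*(m:ℝ)+1)*x + 2*x = (2*((m:ℝ)+1)+1)*x by ring,
        show (2*(m:ℝ)+1)*x + x = 2*((m:ℝ)+1)*x by ring] at h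
      simp only
      push_cast
      field_simp
      rw [show x * (2*(m:ℝ)+1) = (2*(m:ℝ)+1)*x by ring]
      linear_combination h
    have hint : IntegrableOn (fun x => sin ((2*m+1)*x) / sin x + 2 * cos (2*(m+1:ℕ)*x)) (Ioo 0 π) volume := by
      apply ih.1.add
      exact (contIntegrableIoo (by fun_prop)).const_mul 2
    constructor
    · exact hint.congr_fun heq.symm measurableSet_Ioo
    · rw [setIntegral_congr_fun measurableSet_Ioo heq,
        integral_add ih.1 ((contIntegrableIoo (by fun_prop)).const_mul 2),
        ih.2, MeasureTheory.integral_const_mul, int_cos_mul' (m+1) (Nat.succ_pos m)]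
      ring



lemma int_cos_sq : ∫ τ in (0:ℝ)..(2*π), cos τ ^ 2 = π := by
  rw [integral_cos_sq]
  simp [Real.sin_two_pi, Real.cos_two_pi]

lemma int_cos_four : ∫ τ in (0:ℝ)..(2*π), cos τ ^ 4 = 3 * π / 4 := by
  have := integral_cos_pow (a := 0) (b := 2*π) 2
  norm_num [Real.sin_two_pi, Real.cos_two_pi, int_cos_sq] at this
  linarith [this]

lemma int_sin_sq_N (N : ℕ) (hN : 0 < N) : ∫ x in (0:ℝ)..π, sin (N*x) ^ 2 = π / 2 := by
  have h : ∀ x : ℝ, sin ((N:ℝ)*x) ^ 2 = 1/2 - (1/2) * cos (2*N*x) := by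
    intro x
    have := Real.cos_two_mul ((N:ℝ)*x)
    have h2 := Real.sin_sq_add_cos_sq ((N:ℝ)*x)
    rw [show 2*(N:ℝ)*x = 2*((N:ℝ)*x) by ring]
    nlinarith
  simp_rw [h]
  rw [intervalIntegral.integral_sub intervalIntegrable_const
      (by apply IntervalIntegrable.const_mul; apply Continuous.intervalIntegrable; continuity),
    intervalIntegral.integral_const_mul, int_cos_mul N hN]
  simp
  ring



lemma cot_int : ∀ m : ℕ, 0 < m →
    IntegrableOn (fun x => sin (2*m*x) * cos x / sin x) (Ioo 0 π) volume ∧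
    ∫ x in Ioo (0:ℝ) π, sin (2*m*x) * cos x / sin x = π := by
  intro m hm
  induction m with
  | zero => exact absurd hm (lt_irrefl 0)
  | succ m ih =>
    rcases Nat.eq_zero_or_pos m with hm0 | hm1
    · subst hm0
      have heq : EqOn (fun x => sin (2*(0+1:ℕ)*x) * cos x / sin x)
          (fun x => 2 * cos x ^ 2) (Ioo 0 π) := by
        intro x hx
        have hs := sin_ne_zero_Ioo hx
        simp only
        rw [show 2*((0+1:ℕ):ℝ)*x = 2*x by push_cast; ring, sin_two_mul]
        field_simp
      refine ⟨(contIntegrableIoo (by fun_prop)).congr_fun heq.symm measurableSet_Ioo, ?_⟩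
      rw [setIntegral_congr_fun measurableSet_Ioo heq, int_Ioo_eq,
        intervalIntegral.integral_const_mul, integral_cos_sq]
      simp; ring
    · have heq : EqOn (fun x => sin (2*(m+1:ℕ)*x) * cos x / sin x)
          (fun x => sin (2*m*x) * cos x / sin x
            + (cos (2*(m+1:ℕ)*x) + cos (2*m*x))) (Ioo 0 π) := by
        intro x hx
        have hs := sin_ne_zero_Ioo hx
        have h := trig_sin_step (2*m*x) x
        have hcc := trig_cos_step (2*m*x) x
        rw [show 2*(m:ℝ)*x + 2*x = 2*((m:ℝ)+1)*x by ring] at h hcc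
        simp only
        push_cast
        field_simp
        linear_combination cos x * h + sin x * hcc
      have hcont : IntegrableOn (fun x => cos (2*(m+1:ℕ)*x) + cos (2*m*x)) (Ioo 0 π) volume :=
        contIntegrableIoo (by fun_prop)
      have ih' := ih hm1
      have hsum : IntegrableOn (fun x => sin (2*m*x) * cos x / sin x
            + (cos (2*(m+1:ℕ)*x) + cos (2*m*x))) (Ioo 0 π) volume := ih'.1.add hcont
      refine ⟨hsum.congr_fun heq.symm measurableSet_Ioo, ?_⟩
      rw [setIntegral_congr_fun measurableSet_Ioo heq, integral_add ih'.1 hcont,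
        ih'.2, integral_add (contIntegrableIoo (by fun_prop)) (contIntegrableIoo (by fun_prop)),
        int_cos_mul' (m+1) (Nat.succ_pos m), int_cos_mul' m hm1]
      ring

lemma quartic_int (N : ℕ) (hN : 0 < N) :
    IntegrableOn (fun x => sin (N*x)^4 / sin x^2) (Ioo 0 π) volume ∧
    ∫ x in Ioo (0:ℝ) π, sin (N*x)^4 / sin x^2 = N * π / 2 := by
  induction N with
  | zero => exact absurd hN (lt_irrefl 0)
  | succ N ih =>
    rcases Nat.eq_zero_or_pos N with hN0 | hN1
    · subst hN0
      have heq : EqOn (fun x => sin ((0+1:ℕ)*x)^4 / sin x^2) (fun x => sin x ^ 2) (Ioo 0 π) := by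
        intro x hx
        have hs := sin_ne_zero_Ioo hx
        simp only
        push_cast
        rw [one_mul]
        field_simp
      refine ⟨(contIntegrableIoo (by fun_prop)).congr_fun heq.symm measurableSet_Ioo, ?_⟩
      rw [setIntegral_congr_fun measurableSet_Ioo heq, int_Ioo_eq]
      have h1 := int_sin_sq_N 1 one_pos
      simp only [Nat.cast_one, one_mul] at h1
      rw [h1]
      push_cast; ring
    · have hd := dirichlet N
      have hc := cot_int (2*N+1) (Nat.succ_pos _)
      have heq : EqOn (fun x => sin ((N+1:ℕ)*x)^4 / sin x^2)
          (fun x => sin (N*x)^4 / sin x^2 + (sin ((2*N+1)*x) / sin x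
            - (1/2) * (sin (2*(2*N+1:ℕ)*x) * cos x / sin x))) (Ioo 0 π) := by
        intro x hx
        have hs := sin_ne_zero_Ioo hx
        have hK := trig_K ((N:ℝ)*x) x
        rw [show (N:ℝ)*x + x = ((N:ℝ)+1)*x by ring,
          show 2*((N:ℝ)*x) + x = (2*(N:ℝ)+1)*x by ring] at hK
        have h4 : sin (2*(2*(N:ℝ)+1)*x) = 2 * sin ((2*(N:ℝ)+1)*x) * cos ((2*(N:ℝ)+1)*x) := by
          rw [show 2*(2*(N:ℝ)+1)*x = 2*((2*(N:ℝ)+1)*x) by ring, sin_two_mul]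
        have key : sin (((N:ℝ)+1)*x)^4 = sin ((N:ℝ)*x)^4
            + (sin ((2*(N:ℝ)+1)*x) * sin x - (1/2) * (sin (2*(2*(N:ℝ)+1)*x) * cos x * sin x)) := by
          linear_combination hK + (cos x * sin x / 2) * h4
        simp only
        push_cast
        rw [key]
        field_simp
      have hrest : IntegrableOn (fun x => sin ((2*N+1)*x) / sin x
            - (1/2) * (sin (2*(2*N+1:ℕ)*x) * cos x / sin x)) (Ioo 0 π) volume := by
        apply hd.1.sub
        exact (hc.1.const_mul _)
      have ih' := ih hN1
      have hsum : IntegrableOn (fun x => sin (N*x)^4 / sin x^2 + (sin ((2*N+1)*x) / sin x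
            - (1/2) * (sin (2*(2*N+1:ℕ)*x) * cos x / sin x))) (Ioo 0 π) volume := ih'.1.add hrest
      refine ⟨hsum.congr_fun heq.symm measurableSet_Ioo, ?_⟩
      rw [setIntegral_congr_fun measurableSet_Ioo heq, integral_add ih'.1 hrest, ih'.2,
        integral_sub hd.1 (hc.1.const_mul _), hd.2, MeasureTheory.integral_const_mul, hc.2]
      push_cast
      ring



section
variable (w : ℝ → ℝ → ℝ)
  (hw : ContDiffOn ℝ 2 (Function.uncurry w) (Set.univ ×ˢ Set.Icc 0 π))

-- abbreviations
noncomputable def F1 (w : ℝ → ℝ → ℝ) : ℝ × ℝ → (ℝ × ℝ) →L[ℝ] ℝ :=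
  fderivWithin ℝ (Function.uncurry w) (Set.univ ×ˢ Set.Icc 0 π)
noncomputable def F2 (w : ℝ → ℝ → ℝ) : ℝ × ℝ → (ℝ × ℝ) →L[ℝ] ((ℝ × ℝ) →L[ℝ] ℝ) :=
  fderivWithin ℝ (F1 w) (Set.univ ×ˢ Set.Icc 0 π)

lemma hUD : UniqueDiffOn ℝ ((Set.univ : Set ℝ) ×ˢ Set.Icc 0 π) :=
  uniqueDiffOn_univ.prod (uniqueDiffOn_Icc pi_pos)

include hw

lemma hF1cd : ContDiffOn ℝ 1 (F1 w) (Set.univ ×ˢ Set.Icc 0 π) :=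
  hw.fderivWithin hUD (by norm_num)

lemma hF1cont : ContinuousOn (F1 w) (Set.univ ×ˢ Set.Icc 0 π) :=
  (hF1cd w hw).continuousOn

lemma hF2cont : ContinuousOn (F2 w) (Set.univ ×ˢ Set.Icc 0 π) := by
  have h : ContDiffOn ℝ 0 (F2 w) (Set.univ ×ˢ Set.Icc 0 π) :=
    (hF1cd w hw).fderivWithin hUD (by norm_num)
  exact h.continuousOn

-- τ-direction derivatives (valid for every x ∈ Icc)
lemma hD1 {x : ℝ} (hx : x ∈ Icc 0 π) (τ : ℝ) :
    HasDerivAt (fun t => w t x) (F1 w (τ, x) (1, 0)) τ := by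
  have hmem : (τ, x) ∈ (Set.univ : Set ℝ) ×ˢ Set.Icc 0 π := ⟨trivial, hx⟩
  have hf : HasFDerivWithinAt (Function.uncurry w) (F1 w (τ, x))
      ((Set.univ : Set ℝ) ×ˢ Set.Icc 0 π) (τ, x) :=
    ((hw.differentiableOn (by norm_num)) _ hmem).hasFDerivWithinAt
  have hL : HasDerivWithinAt (fun t : ℝ => ((t, x) : ℝ × ℝ)) ((1, 0) : ℝ × ℝ) univ τ :=
    ((hasDerivAt_id τ).prodMk (hasDerivAt_const τ x)).hasDerivWithinAt
  have := hf.comp_hasDerivWithinAt τ hL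
    (fun t _ => (⟨trivial, hx⟩ : ((t, x) : ℝ × ℝ) ∈ (Set.univ : Set ℝ) ×ˢ Set.Icc 0 π))
  rw [hasDerivWithinAt_univ] at this
  exact this

lemma hD1' {x : ℝ} (hx : x ∈ Icc 0 π) (τ : ℝ) :
    HasDerivAt (fun t => F1 w (t, x)) (F2 w (τ, x) (1, 0)) τ := by
  have hmem : (τ, x) ∈ (Set.univ : Set ℝ) ×ˢ Set.Icc 0 π := ⟨trivial, hx⟩
  have hf : HasFDerivWithinAt (F1 w) (F2 w (τ, x))
      ((Set.univ : Set ℝ) ×ˢ Set.Icc 0 π) (τ, x) :=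
    (((hF1cd w hw).differentiableOn (by norm_num)) _ hmem).hasFDerivWithinAt
  have hL : HasDerivWithinAt (fun t : ℝ => ((t, x) : ℝ × ℝ)) ((1, 0) : ℝ × ℝ) univ τ :=
    ((hasDerivAt_id τ).prodMk (hasDerivAt_const τ x)).hasDerivWithinAt
  have := hf.comp_hasDerivWithinAt τ hL
    (fun t _ => (⟨trivial, hx⟩ : ((t, x) : ℝ × ℝ) ∈ (Set.univ : Set ℝ) ×ˢ Set.Icc 0 π))
  rw [hasDerivWithinAt_univ] at this
  exact this

lemma hK1deriv {x : ℝ} (hx : x ∈ Icc 0 π) (τ : ℝ) :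
    HasDerivAt (fun t => F1 w (t, x) (1, 0)) (F2 w (τ, x) (1, 0) (1, 0)) τ := by
  have h := (hD1' w hw hx τ).clm_apply (hasDerivAt_const τ ((1, 0) : ℝ × ℝ))
  simpa using h

-- deriv identification in τ
lemma deriv_tau {x : ℝ} (hx : x ∈ Icc 0 π) (τ : ℝ) :
    deriv (deriv (fun t => w t x)) τ = F2 w (τ, x) (1, 0) (1, 0) := by
  have h1 : deriv (fun t => w t x) = fun t => F1 w (t, x) (1, 0) :=
    funext fun t => (hD1 w hw hx t).deriv
  rw [h1]
  exact (hK1deriv w hw hx τ).deriv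

-- x-direction
lemma hDx {τ x : ℝ} (hx : x ∈ Icc 0 π) :
    HasDerivWithinAt (fun y => w τ y) (F1 w (τ, x) (0, 1)) (Icc 0 π) x := by
  have hmem : (τ, x) ∈ (Set.univ : Set ℝ) ×ˢ Set.Icc 0 π := ⟨trivial, hx⟩
  have hf : HasFDerivWithinAt (Function.uncurry w) (F1 w (τ, x))
      ((Set.univ : Set ℝ) ×ˢ Set.Icc 0 π) (τ, x) :=
    ((hw.differentiableOn (by norm_num)) _ hmem).hasFDerivWithinAt
  have hL : HasDerivWithinAt (fun y : ℝ => ((τ, y) : ℝ × ℝ)) ((0, 1) : ℝ × ℝ) (Icc 0 π) x :=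
    ((hasDerivAt_const x τ).prodMk (hasDerivAt_id x)).hasDerivWithinAt
  exact hf.comp_hasDerivWithinAt x hL (fun y hy => ⟨trivial, hy⟩)

lemma hDx' {τ x : ℝ} (hx : x ∈ Icc 0 π) :
    HasDerivWithinAt (fun y => F1 w (τ, y)) (F2 w (τ, x) (0, 1)) (Icc 0 π) x := by
  have hmem : (τ, x) ∈ (Set.univ : Set ℝ) ×ˢ Set.Icc 0 π := ⟨trivial, hx⟩
  have hf : HasFDerivWithinAt (F1 w) (F2 w (τ, x))
      ((Set.univ : Set ℝ) ×ˢ Set.Icc 0 π) (τ, x) :=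
    (((hF1cd w hw).differentiableOn (by norm_num)) _ hmem).hasFDerivWithinAt
  have hL : HasDerivWithinAt (fun y : ℝ => ((τ, y) : ℝ × ℝ)) ((0, 1) : ℝ × ℝ) (Icc 0 π) x :=
    ((hasDerivAt_const x τ).prodMk (hasDerivAt_id x)).hasDerivWithinAt
  exact hf.comp_hasDerivWithinAt x hL (fun y hy => ⟨trivial, hy⟩)

lemma hDxAt {τ x : ℝ} (hx : x ∈ Ioo 0 π) :
    HasDerivAt (fun y => w τ y) (F1 w (τ, x) (0, 1)) x :=
  (hDx w hw (Ioo_subset_Icc_self hx)).hasDerivAt (Icc_mem_nhds hx.1 hx.2)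

lemma hW1deriv {τ x : ℝ} (hx : x ∈ Ioo 0 π) :
    HasDerivAt (fun y => F1 w (τ, y) (0, 1)) (F2 w (τ, x) (0, 1) (0, 1)) x := by
  have h := ((hDx' w hw (τ := τ) (Ioo_subset_Icc_self hx)).hasDerivAt
      (Icc_mem_nhds hx.1 hx.2)).clm_apply (hasDerivAt_const x ((0, 1) : ℝ × ℝ))
  simpa using h

lemma deriv_x {τ x : ℝ} (hx : x ∈ Ioo 0 π) :
    deriv (deriv (fun y => w τ y)) x = F2 w (τ, x) (0, 1) (0, 1) := by
  have h1 : deriv (fun y => w τ y) =ᶠ[nhds x] fun y => F1 w (τ, y) (0, 1) := by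
    filter_upwards [isOpen_Ioo.mem_nhds hx] with y hy
    exact (hDxAt w hw hy).deriv
  rw [h1.deriv_eq]
  exact (hW1deriv w hw hx).deriv

end



lemma fubini_rect (f : ℝ → ℝ → ℝ)
    (hf : ContinuousOn (Function.uncurry f) (Icc 0 (2*π) ×ˢ Icc 0 π)) :
    ∫ τ in (0:ℝ)..(2*π), ∫ x in (0:ℝ)..π, f τ x = ∫ x in (0:ℝ)..π, ∫ τ in (0:ℝ)..(2*π), f τ x := by
  have h2π : (0:ℝ) ≤ 2*π := by positivity
  have hint : Integrable (Function.uncurry f)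
      ((volume.restrict (Ioc 0 (2*π))).prod (volume.restrict (Ioc 0 π))) := by
    rw [Measure.prod_restrict]
    have h1 : IntegrableOn (Function.uncurry f) (Icc 0 (2*π) ×ˢ Icc 0 π) volume :=
      hf.integrableOn_compact (isCompact_Icc.prod isCompact_Icc)
    rw [Measure.volume_eq_prod] at h1
    exact h1.mono_set (prod_mono Ioc_subset_Icc_self Ioc_subset_Icc_self)
  rw [intervalIntegral.integral_of_le h2π, intervalIntegral.integral_of_le pi_pos.le]
  simp_rw [intervalIntegral.integral_of_le pi_pos.le, intervalIntegral.integral_of_le h2π]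
  exact integral_integral_swap hint

lemma inner_integrable (f : ℝ → ℝ → ℝ)
    (hf : ContinuousOn (Function.uncurry f) (Icc 0 (2*π) ×ˢ Icc 0 π)) :
    IntervalIntegrable (fun τ => ∫ x in (0:ℝ)..π, f τ x) volume 0 (2*π) := by
  have h2π : (0:ℝ) ≤ 2*π := by positivity
  have hint : Integrable (Function.uncurry f)
      ((volume.restrict (Ioc 0 (2*π))).prod (volume.restrict (Ioc 0 π))) := by
    rw [Measure.prod_restrict]
    have h1 : IntegrableOn (Function.uncurry f) (Icc 0 (2*π) ×ˢ Icc 0 π) volume :=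
      hf.integrableOn_compact (isCompact_Icc.prod isCompact_Icc)
    rw [Measure.volume_eq_prod] at h1
    exact h1.mono_set (prod_mono Ioc_subset_Icc_self Ioc_subset_Icc_self)
  rw [intervalIntegrable_iff_integrableOn_Ioc_of_le h2π]
  have := hint.integral_prod_left
  simp_rw [intervalIntegral.integral_of_le pi_pos.le]
  exact this



lemma cont_slice_x {g : ℝ × ℝ → ℝ} (hg : ContinuousOn g (Set.univ ×ˢ Set.Icc 0 π)) (τ : ℝ) :
    ContinuousOn (fun x => g (τ, x)) (Icc 0 π) :=
  hg.comp (Continuous.continuousOn (by fun_prop)) (fun x hx => ⟨trivial, hx⟩)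


lemma cont_slice_t {g : ℝ × ℝ → ℝ} (hg : ContinuousOn g (Set.univ ×ˢ Set.Icc 0 π))
    {x : ℝ} (hx : x ∈ Icc 0 π) : Continuous (fun τ => g (τ, x)) := by
  rw [← continuousOn_univ]
  exact hg.comp (Continuous.continuousOn (by fun_prop)) (fun τ _ => ⟨trivial, hx⟩)


lemma hNsin (N : ℕ) (y : ℝ) : HasDerivAt (fun z : ℝ => sin ((N:ℝ)*z)) (cos ((N:ℝ)*y) * N) y := by
  have h : HasDerivAt (fun z : ℝ => (N:ℝ)*z) (N:ℝ) y := by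
    simpa using (hasDerivAt_id y).const_mul (N:ℝ)
  exact (Real.hasDerivAt_sin _).comp y h


lemma hNcos (N : ℕ) (y : ℝ) : HasDerivAt (fun z : ℝ => cos ((N:ℝ)*z)) (-sin ((N:ℝ)*y) * N) y := by
  have h : HasDerivAt (fun z : ℝ => (N:ℝ)*z) (N:ℝ) y := by
    simpa using (hasDerivAt_id y).const_mul (N:ℝ)
  exact (Real.hasDerivAt_cos _).comp y h


section
variable (w : ℝ → ℝ → ℝ) (hw : ContDiffOn ℝ 2 (Function.uncurry w) (Set.univ ×ˢ Set.Icc 0 π))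
include hw

lemma K2cont : ContinuousOn (fun p : ℝ × ℝ => F2 w p (1, 0) (1, 0)) (Set.univ ×ˢ Set.Icc 0 π) :=
  ((hF2cont w hw).clm_apply continuousOn_const).clm_apply continuousOn_const

lemma W2cont : ContinuousOn (fun p : ℝ × ℝ => F2 w p (0, 1) (0, 1)) (Set.univ ×ˢ Set.Icc 0 π) :=
  ((hF2cont w hw).clm_apply continuousOn_const).clm_apply continuousOn_const

lemma W1cont : ContinuousOn (fun p : ℝ × ℝ => F1 w p (0, 1)) (Set.univ ×ˢ Set.Icc 0 π) :=
  (hF1cont w hw).clm_apply continuousOn_const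

lemma wcont : ContinuousOn (fun p : ℝ × ℝ => w p.1 p.2) (Set.univ ×ˢ Set.Icc 0 π) := by
  have := hw.continuousOn
  exact this

lemma xparts (N : ℕ) (hbc0 : ∀ τ : ℝ, w τ 0 = 0) (hbcπ : ∀ τ : ℝ, w τ π = 0) (τ : ℝ) :
    ∫ y in (0:ℝ)..π, (F2 w (τ, y) (0, 1) (0, 1) + (N:ℝ)^2 * w τ y) * sin (N*y) = 0 := by
  have hsc : Continuous fun y : ℝ => sin ((N:ℝ)*y) :=
    Real.continuous_sin.comp (continuous_const.mul continuous_id)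
  have hcc : Continuous fun y : ℝ => (N:ℝ) * cos ((N:ℝ)*y) :=
    continuous_const.mul (Real.continuous_cos.comp (continuous_const.mul continuous_id))
  set Φ : ℝ → ℝ := fun y => F1 w (τ, y) (0, 1) * sin (N*y) - w τ y * ((N:ℝ) * cos (N*y)) with hΦ
  have hderiv : ∀ y ∈ Ioo (0:ℝ) π, HasDerivAt Φ
      ((F2 w (τ, y) (0, 1) (0, 1) + (N:ℝ)^2 * w τ y) * sin (N*y)) y := by
    intro y hy
    have h1 := ((hW1deriv w hw (τ := τ) hy).mul (hNsin N y)).sub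
      ((hDxAt w hw (τ := τ) hy).mul ((hNcos N y).const_mul (N:ℝ)))
    refine h1.congr_deriv ?_
    ring
  have hcontΦ : ContinuousOn Φ (Icc 0 π) := by
    apply ContinuousOn.sub
    · exact (cont_slice_x (W1cont w hw) τ).mul hsc.continuousOn
    · exact (cont_slice_x (wcont w hw) τ).mul hcc.continuousOn
  have hint : IntervalIntegrable
      (fun y => (F2 w (τ, y) (0, 1) (0, 1) + (N:ℝ)^2 * w τ y) * sin (N*y)) volume 0 π := by
    apply ContinuousOn.intervalIntegrable
    rw [uIcc_of_le pi_pos.le]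
    exact ((cont_slice_x (W2cont w hw) τ).add
      (continuousOn_const.mul (cont_slice_x (wcont w hw) τ))).mul hsc.continuousOn
  rw [intervalIntegral.integral_eq_sub_of_hasDerivAt_of_le pi_pos.le hcontΦ hderiv hint]
  have hsinNπ : sin ((N:ℝ)*π) = 0 := Real.sin_nat_mul_pi N
  simp [hΦ, hbc0 τ, hbcπ τ, hsinNπ]

lemma tparts (hper : ∀ τ x : ℝ, w (τ + 2*π) x = w τ x) {x : ℝ} (hx : x ∈ Icc 0 π) :
    ∫ t in (0:ℝ)..(2*π), (F2 w (t, x) (1, 0) (1, 0) + w t x) * cos t = 0 := by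
  set Ψ : ℝ → ℝ := fun t => F1 w (t, x) (1, 0) * cos t + w t x * sin t with hΨ
  have hderiv : ∀ t ∈ uIcc (0:ℝ) (2*π), HasDerivAt Ψ
      ((F2 w (t, x) (1, 0) (1, 0) + w t x) * cos t) t := by
    intro t _
    have h1 := ((hK1deriv w hw hx t).mul (Real.hasDerivAt_cos t)).add
      ((hD1 w hw hx t).mul (Real.hasDerivAt_sin t))
    refine h1.congr_deriv ?_
    ring
  have hint : IntervalIntegrable
      (fun t => (F2 w (t, x) (1, 0) (1, 0) + w t x) * cos t) volume 0 (2*π) := by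
    apply Continuous.intervalIntegrable
    exact ((cont_slice_t (K2cont w hw) hx).add (cont_slice_t (wcont w hw) hx)).mul Real.continuous_cos
  rw [intervalIntegral.integral_eq_sub_of_hasDerivAt hderiv hint]
  have hK1per : F1 w (2*π, x) (1, 0) = F1 w (0, x) (1, 0) := by
    have hu : ∀ t, F1 w (t, x) (1, 0) = deriv (fun s => w s x) t := fun t =>
      ((hD1 w hw hx t).deriv).symm
    have e : (fun s => w s x) = (fun s => w (s + 2*π) x) := funext fun s => (hper s x).symm
    have e2 : deriv (fun s => w (s + 2*π) x) 0 = deriv (fun s => w s x) (0 + 2*π) :=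
      deriv_comp_add_const (fun s => w s x) (2*π) 0
    rw [← e] at e2
    norm_num at e2
    rw [hu, hu, ← e2]
  simp [hΨ, Real.sin_two_pi, Real.cos_two_pi, hK1per]

end

/-- Removal of the secular term at first order forces ω = 3N/4. -/
theorem first_order_frequency_correction (N : ℕ) (hN : 0 < N) (ω : ℝ)
    (w : ℝ → ℝ → ℝ)
    (hw : ContDiffOn ℝ 2 (Function.uncurry w) (Set.univ ×ˢ Set.Icc 0 π))
    (hper : ∀ τ x : ℝ, w (τ + 2 * π) x = w τ x)
    (hbc0 : ∀ τ : ℝ, w τ 0 = 0)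
    (hbcπ : ∀ τ : ℝ, w τ π = 0)
    (hpde : ∀ τ x : ℝ, x ∈ Set.Ioo 0 π →
      (N : ℝ) ^ 2 * deriv (deriv (fun t => w t x)) τ
        - deriv (deriv (fun y => w τ y)) x
        = ω * Real.cos τ * Real.sin (N * x)
          - (Real.cos τ) ^ 3 * (Real.sin (N * x)) ^ 3 / (Real.sin x) ^ 2) :
    ω = 3 * N / 4 := by
  have hπ := Real.pi_pos
  have hsub : (Icc (0:ℝ) (2*π) ×ˢ Icc (0:ℝ) π) ⊆ ((univ : Set ℝ) ×ˢ Icc 0 π) :=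
    prod_mono (subset_univ _) subset_rfl
  have hNR : ((N:ℝ))^2 ≠ 0 := by positivity
  have hsinc : Continuous fun y : ℝ => sin ((N:ℝ)*y) :=
    Real.continuous_sin.comp (continuous_const.mul continuous_id)
  -- continuity of slices
  have hK2sx : ∀ τ : ℝ, ContinuousOn (fun x => F2 w (τ, x) (1,0) (1,0)) (Icc 0 π) :=
    fun τ => cont_slice_x (K2cont w hw) τ
  have hW2sx : ∀ τ : ℝ, ContinuousOn (fun x => F2 w (τ, x) (0,1) (0,1)) (Icc 0 π) :=
    fun τ => cont_slice_x (W2cont w hw) τ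
  have hwsx : ∀ τ : ℝ, ContinuousOn (fun x => w τ x) (Icc 0 π) :=
    fun τ => cont_slice_x (wcont w hw) τ
  have hK2st : ∀ x ∈ Icc (0:ℝ) π, Continuous (fun τ => F2 w (τ, x) (1,0) (1,0)) :=
    fun x hx => cont_slice_t (K2cont w hw) hx
  have hwst : ∀ x ∈ Icc (0:ℝ) π, Continuous (fun τ => w τ x) :=
    fun x hx => cont_slice_t (wcont w hw) hx
  -- interval integrability in x of pieces
  have hK2i : ∀ τ : ℝ, IntervalIntegrable (fun x => F2 w (τ,x) (1,0) (1,0) * sin (N*x)) volume 0 π := by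
    intro τ
    apply ContinuousOn.intervalIntegrable
    rw [uIcc_of_le hπ.le]
    exact (hK2sx τ).mul hsinc.continuousOn
  have hW2i : ∀ τ : ℝ, IntervalIntegrable (fun x => F2 w (τ,x) (0,1) (0,1) * sin (N*x)) volume 0 π := by
    intro τ
    apply ContinuousOn.intervalIntegrable
    rw [uIcc_of_le hπ.le]
    exact (hW2sx τ).mul hsinc.continuousOn
  have hwi : ∀ τ : ℝ, IntervalIntegrable (fun x => w τ x * sin (N*x)) volume 0 π := by
    intro τ
    apply ContinuousOn.intervalIntegrable
    rw [uIcc_of_le hπ.le]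
    exact (hwsx τ).mul hsinc.continuousOn
  -- Step 1: x-parts consequence
  have hxp : ∀ τ : ℝ, ∫ x in (0:ℝ)..π, F2 w (τ,x) (0,1) (0,1) * sin (N*x)
      = -((N:ℝ)^2 * ∫ x in (0:ℝ)..π, w τ x * sin (N*x)) := by
    intro τ
    have h0 := xparts w hw N hbc0 hbcπ τ
    have hsplit : (fun y => (F2 w (τ, y) (0, 1) (0, 1) + (N:ℝ)^2 * w τ y) * sin (N*y))
        = fun y => F2 w (τ,y) (0,1) (0,1) * sin (N*y) + (N:ℝ)^2 * (w τ y * sin (N*y)) :=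
      funext fun y => by ring
    rw [hsplit] at h0
    rw [intervalIntegral.integral_add (hW2i τ) ((hwi τ).const_mul _),
      intervalIntegral.integral_const_mul] at h0
    linarith
  -- Step 2: the τ-pointwise identity (*)
  have hstar : ∀ τ : ℝ, (N:ℝ)^2 * ∫ x in (0:ℝ)..π, F2 w (τ,x) (1,0) (1,0) * sin (N*x)
      = ω * (π/2) * cos τ - ((N:ℝ)*π/2) * cos τ^3
        - (N:ℝ)^2 * ∫ x in (0:ℝ)..π, w τ x * sin (N*x) := by
    intro τ
    have hL : ∫ x in (0:ℝ)..π, ((N:ℝ)^2 * F2 w (τ,x) (1,0) (1,0) - F2 w (τ,x) (0,1) (0,1)) * sin (N*x)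
        = (N:ℝ)^2 * (∫ x in (0:ℝ)..π, F2 w (τ,x) (1,0) (1,0) * sin (N*x))
          - ∫ x in (0:ℝ)..π, F2 w (τ,x) (0,1) (0,1) * sin (N*x) := by
      have hsplit : (fun x => ((N:ℝ)^2 * F2 w (τ,x) (1,0) (1,0) - F2 w (τ,x) (0,1) (0,1)) * sin (N*x))
          = fun x => (N:ℝ)^2 * (F2 w (τ,x) (1,0) (1,0) * sin (N*x)) - F2 w (τ,x) (0,1) (0,1) * sin (N*x) :=
        funext fun x => by ring
      rw [hsplit, intervalIntegral.integral_sub ((hK2i τ).const_mul _) (hW2i τ),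
        intervalIntegral.integral_const_mul]
    have hR : ∫ x in (0:ℝ)..π, ((N:ℝ)^2 * F2 w (τ,x) (1,0) (1,0) - F2 w (τ,x) (0,1) (0,1)) * sin (N*x)
        = ω * cos τ * (π/2) - cos τ^3 * ((N:ℝ)*π/2) := by
      rw [← int_Ioo_eq]
      rw [setIntegral_congr_fun measurableSet_Ioo
        (g := fun x => (ω * cos τ) * sin ((N:ℝ)*x)^2 - cos τ^3 * (sin ((N:ℝ)*x)^4 / sin x^2))]
      · have hI1 : IntegrableOn (fun x => (ω * cos τ) * sin ((N:ℝ)*x)^2) (Ioo 0 π) volume :=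
          contIntegrableIoo (by fun_prop)
        have hI2 : IntegrableOn (fun x => cos τ^3 * (sin ((N:ℝ)*x)^4 / sin x^2)) (Ioo 0 π) volume :=
          (quartic_int N hN).1.const_mul _
        rw [integral_sub hI1 hI2, MeasureTheory.integral_const_mul, MeasureTheory.integral_const_mul,
          (quartic_int N hN).2, int_Ioo_eq (fun x => sin ((N:ℝ)*x)^2), int_sin_sq_N N hN]
      · intro x hx
        have hp := hpde τ x hx
        rw [deriv_tau w hw (Ioo_subset_Icc_self hx) τ, deriv_x w hw hx] at hp
        simp only
        rw [hp]
        ring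
    rw [hL, hxp τ] at hR
    linarith
  -- Define the two double integrals
  set G : ℝ → ℝ → ℝ := fun τ x => F2 w (τ,x) (1,0) (1,0) * sin ((N:ℝ)*x) * cos τ with hGdef
  set Wf : ℝ → ℝ → ℝ := fun τ x => w τ x * sin ((N:ℝ)*x) * cos τ with hWfdef
  have hGcont : ContinuousOn (Function.uncurry G) (Icc 0 (2*π) ×ˢ Icc 0 π) := by
    apply ContinuousOn.mul
    apply ContinuousOn.mul
    · exact (K2cont w hw).mono hsub
    · exact (Continuous.continuousOn (by fun_prop))
    · exact (Continuous.continuousOn (by fun_prop))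
  have hWfcont : ContinuousOn (Function.uncurry Wf) (Icc 0 (2*π) ×ˢ Icc 0 π) := by
    apply ContinuousOn.mul
    apply ContinuousOn.mul
    · exact (wcont w hw).mono hsub
    · exact (Continuous.continuousOn (by fun_prop))
    · exact (Continuous.continuousOn (by fun_prop))
  set A : ℝ := ∫ τ in (0:ℝ)..(2*π), ∫ x in (0:ℝ)..π, G τ x with hAdef
  set H : ℝ := ∫ τ in (0:ℝ)..(2*π), ∫ x in (0:ℝ)..π, Wf τ x with hHdef
  -- Claim 1 : A = -H
  have hclaim1 : A = -H := by
    rw [hAdef, fubini_rect G hGcont]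
    have hinner : ∀ x ∈ uIcc (0:ℝ) π,
        (fun x => ∫ τ in (0:ℝ)..(2*π), G τ x) x = (fun x => -∫ τ in (0:ℝ)..(2*π), Wf τ x) x := by
      intro x hx
      rw [uIcc_of_le hπ.le] at hx
      simp only
      have e1 : (fun τ => G τ x) = fun τ => sin ((N:ℝ)*x) * (F2 w (τ,x) (1,0) (1,0) * cos τ) :=
        funext fun τ => by rw [hGdef]; ring
      have e2 : (fun τ => Wf τ x) = fun τ => sin ((N:ℝ)*x) * (w τ x * cos τ) :=
        funext fun τ => by rw [hWfdef]; ring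
      have hKc : IntervalIntegrable (fun τ => F2 w (τ,x) (1,0) (1,0) * cos τ) volume 0 (2*π) :=
        Continuous.intervalIntegrable ((hK2st x hx).mul Real.continuous_cos) _ _
      have hwc : IntervalIntegrable (fun τ => w τ x * cos τ) volume 0 (2*π) :=
        Continuous.intervalIntegrable ((hwst x hx).mul Real.continuous_cos) _ _
      have htp := tparts w hw hper hx
      have hsplit : (fun t => (F2 w (t, x) (1, 0) (1, 0) + w t x) * cos t)
          = fun t => F2 w (t,x) (1,0) (1,0) * cos t + w t x * cos t := funext fun t => by ring
      rw [hsplit, intervalIntegral.integral_add hKc hwc] at htp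
      rw [e1, e2, intervalIntegral.integral_const_mul, intervalIntegral.integral_const_mul]
      have : ∫ τ in (0:ℝ)..(2*π), F2 w (τ,x) (1,0) (1,0) * cos τ
          = -∫ τ in (0:ℝ)..(2*π), w τ x * cos τ := by linarith
      rw [this]
      ring
    rw [intervalIntegral.integral_congr hinner, intervalIntegral.integral_neg, hHdef,
      fubini_rect Wf hWfcont]
  -- Claim 2 : A = S / N^2 - H
  have hclaim2 : A = (ω * (π/2) * π - ((N:ℝ)*π/2) * (3*π/4)) / (N:ℝ)^2 - H := by
    have hfun : ∀ τ ∈ uIcc (0:ℝ) (2*π),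
        (fun τ => ∫ x in (0:ℝ)..π, G τ x) τ
        = (fun τ => (ω * (π/2) * cos τ^2 - ((N:ℝ)*π/2) * cos τ^4) / (N:ℝ)^2
            - ∫ x in (0:ℝ)..π, Wf τ x) τ := by
      intro τ _
      simp only
      have e1 : (fun x => G τ x) = fun x => cos τ * (F2 w (τ,x) (1,0) (1,0) * sin ((N:ℝ)*x)) :=
        funext fun x => by rw [hGdef]; ring
      have e2 : (fun x => Wf τ x) = fun x => cos τ * (w τ x * sin ((N:ℝ)*x)) :=
        funext fun x => by rw [hWfdef]; ring
      rw [e1, e2, intervalIntegral.integral_const_mul, intervalIntegral.integral_const_mul]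
      have hs := hstar τ
      field_simp
      linear_combination (2 * cos τ) * hs
    rw [hAdef, intervalIntegral.integral_congr hfun]
    have hInt1 : IntervalIntegrable
        (fun τ => (ω * (π/2) * cos τ^2 - ((N:ℝ)*π/2) * cos τ^4) / (N:ℝ)^2) volume 0 (2*π) :=
      Continuous.intervalIntegrable (by fun_prop) _ _
    have hInt2 : IntervalIntegrable (fun τ => ∫ x in (0:ℝ)..π, Wf τ x) volume 0 (2*π) :=
      inner_integrable Wf hWfcont
    rw [intervalIntegral.integral_sub hInt1 hInt2, ← hHdef]
    congr 1
    have e3 : (fun τ => (ω * (π/2) * cos τ^2 - ((N:ℝ)*π/2) * cos τ^4) / (N:ℝ)^2)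
        = fun τ => ((1:ℝ)/(N:ℝ)^2) * ((ω * (π/2)) * cos τ^2 - ((N:ℝ)*π/2) * cos τ^4) :=
      funext fun τ => by ring
    rw [e3, intervalIntegral.integral_const_mul,
      intervalIntegral.integral_sub
        ((Continuous.intervalIntegrable (by fun_prop) _ _))
        ((Continuous.intervalIntegrable (by fun_prop) _ _)),
      intervalIntegral.integral_const_mul, intervalIntegral.integral_const_mul,
      int_cos_sq, int_cos_four]
    ring
  -- conclude
  have hS : ω * (π/2) * π - ((N:ℝ)*π/2) * (3*π/4) = 0 := by
    have : (ω * (π/2) * π - ((N:ℝ)*π/2) * (3*π/4)) / (N:ℝ)^2 = 0 := by linarith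
    field_simp at this
    linarith
  have hπ2 : (π:ℝ)^2 ≠ 0 := by positivity
  have : ω * π^2 = (3 * (N:ℝ) / 4) * π^2 := by ring_nf; ring_nf at hS; linarith
  exact mul_right_cancel₀ hπ2 this
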